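/- Under the hypotheses of the previous statement, suppose additionally that each $e_m$ is Lipschitz with $K_m = \|e_m'\|_{\infty}$, the $e_m$ are uniformly bounded, and there exists $\alpha \in (0,2]$ with $\sum_{m=1}^{\infty} \gamma_m K_m^{\alpha} < \infty$. Then $|K - \mathrm{Tr}(Q)| \le C h^{\alpha}$ for a constant $C$ independent of the maximal mesh size $h = \max_j |I_j|$, provided $\sum_j h_j \le C'$ (fixed total domain length). -/

import Mathlib

open MeasureTheory intervalIntegral Set
set_option maxHeartbeats 1000000

lemma min_sq_le {x y α : ℝ} (hx : 0 ≤ x) (hy : 0 ≤ y) (hα : 0 < α) (hα2 : α ≤ 2) :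
    (min x y) ^ 2 ≤ x ^ α * y ^ (2 - α) := by
  have hm : 0 ≤ min x y := le_min hx hy
  have h2 : (min x y) ^ 2 = (min x y) ^ (α + (2 - α)) := by
    rw [show α + (2 - α) = (2:ℝ) by ring, Real.rpow_two]
  rw [h2, Real.rpow_add' hm (by norm_num)]
  exact mul_le_mul (Real.rpow_le_rpow hm (min_le_left _ _) hα.le)
    (Real.rpow_le_rpow hm (min_le_right _ _) (by linarith))
    (Real.rpow_nonneg hm _) (Real.rpow_nonneg hx _)

/-- generalized Cauchy-Schwarz: only `φ*f` and `φ^2` need be integrable. -/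
lemma cs_lemma {a b M : ℝ} (hab : a ≤ b) {φ f : ℝ → ℝ} (hf : Continuous f)
    (hbd : ∀ s, |f s| ≤ M)
    (hφ2 : IntervalIntegrable (fun s => (φ s) ^ 2) volume a b)
    (hφf : IntervalIntegrable (fun s => φ s * f s) volume a b) :
    (∫ s in a..b, φ s * f s) ^ 2 ≤
      (∫ s in a..b, (φ s) ^ 2) * ∫ s in a..b, (f s) ^ 2 := by
  set μ := volume.restrict (Ioc a b) with hμ
  have hIoc : ∀ g : ℝ → ℝ, IntervalIntegrable g volume a b → Integrable g μ := by
    intro g hg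
    exact (intervalIntegrable_iff_integrableOn_Ioc_of_le hab).1 hg
  have hu : Integrable (fun s => φ s * f s) μ := hIoc _ hφf
  have hφ2i : Integrable (fun s => (φ s) ^ 2) μ := hIoc _ hφ2
  set v : ℝ → ℝ := fun s => if f s = 0 then 0 else (φ s * f s) / f s with hv
  have hvm : AEStronglyMeasurable v μ := by
    obtain ⟨g, hgm, hge⟩ := hu.aestronglyMeasurable
    refine ⟨fun s => if f s = 0 then 0 else g s / f s, ?_, ?_⟩
    · exact (Measurable.ite (hf.measurable (measurableSet_singleton 0))
        measurable_const (hgm.measurable.div hf.measurable)).stronglyMeasurable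
    · filter_upwards [hge] with s hs
      by_cases h : f s = 0 <;> simp [hv, h, hs]
  have hvf : ∀ s, v s * f s = φ s * f s := by
    intro s; by_cases h : f s = 0 <;> simp [hv, h, div_mul_cancel₀]
  have hv2 : ∀ s, (v s) ^ 2 ≤ (φ s) ^ 2 := by
    intro s; by_cases h : f s = 0
    · simp [hv, h]; positivity
    · simp [hv, h, mul_div_cancel_right₀ _ h]
  have hv2i : Integrable (fun s => (v s) ^ 2) μ := by
    refine (hφ2i.mono (hvm.pow 2) ?_)
    filter_upwards with s
    simpa [abs_of_nonneg (sq_nonneg (φ s)), abs_of_nonneg (sq_nonneg (v s))] using hv2 s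
  have hf2i : Integrable (fun s => (f s) ^ 2) μ := hIoc _ ((hf.pow 2).intervalIntegrable a b)
  have hvfi : Integrable (fun s => v s * f s) μ := by
    refine hu.congr ?_
    filter_upwards with s using (hvf s).symm
  rw [intervalIntegral.integral_of_le hab, intervalIntegral.integral_of_le hab,
    intervalIntegral.integral_of_le hab]
  have hufv : (∫ s in Ioc a b, φ s * f s) = ∫ s, v s * f s ∂μ := by
    rw [hμ]; exact (integral_congr_ae (by filter_upwards with s using (hvf s).symm))
  rw [hufv]
  set V := ∫ s, (v s) ^ 2 ∂μ with hV
  set I := ∫ s, v s * f s ∂μ with hI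
  set E := ∫ s, (f s) ^ 2 ∂μ with hE'
  have hVnn : 0 ≤ V := integral_nonneg fun s => sq_nonneg _
  have hVφ : V ≤ ∫ s in Ioc a b, (φ s) ^ 2 := by
    rw [hV]; exact integral_mono hv2i hφ2i fun s => hv2 s
  have hEnn : 0 ≤ E := integral_nonneg fun s => sq_nonneg _
  have key : I ^ 2 ≤ V * E := by
    rcases eq_or_lt_of_le hVnn with hV0 | hVpos
    · have hvz : v =ᵐ[μ] 0 := by
        have := (integral_eq_zero_iff_of_nonneg (fun s => sq_nonneg (v s)) hv2i).1 hV0.symm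
        filter_upwards [this] with s hs
        exact pow_eq_zero_iff (n := 2) (by norm_num) |>.1 hs
      have hI0 : I = 0 := by
        rw [hI]
        rw [MeasureTheory.integral_congr_ae (g := fun _ => (0:ℝ)) (by
          filter_upwards [hvz] with s hs; simp [hs])]
        simp
      rw [hI0]; simpa using mul_nonneg hVnn hEnn
    · set t := I / V with ht
      have I1 : Integrable (fun s => (f s) ^ 2 - 2 * t * (v s * f s)) μ :=
        hf2i.sub (hvfi.const_mul _)
      have I2 : Integrable (fun s => t ^ 2 * (v s) ^ 2) μ := hv2i.const_mul _
      have hexp : 0 ≤ ∫ s, (f s - t * v s) ^ 2 ∂μ := integral_nonneg fun s => sq_nonneg _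
      have hdecomp : (fun s => (f s - t * v s) ^ 2)
          = fun s => ((f s) ^ 2 - 2 * t * (v s * f s)) + t ^ 2 * (v s) ^ 2 := by
        funext s; ring
      rw [hdecomp, integral_add I1 I2, integral_sub hf2i (hvfi.const_mul _),
        MeasureTheory.integral_const_mul, MeasureTheory.integral_const_mul,
        ← hI, ← hE', ← hV] at hexp
      have hVne : V ≠ 0 := ne_of_gt hVpos
      have htV : t * V = I := div_mul_cancel₀ _ hVne
      nlinarith [mul_nonneg hVnn hexp, sq_nonneg t]
  calc I ^ 2 ≤ V * E := key
    _ ≤ (∫ s in Ioc a b, (φ s) ^ 2) * E := mul_le_mul_of_nonneg_right hVφ hEnn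

lemma meansq {a b h M Kc : ℝ} (hab : a < b) (hh : b - a ≤ h) (hM : 0 ≤ M) (hK : 0 ≤ Kc)
    {f : ℝ → ℝ} (hlip : LipschitzWith Kc.toNNReal f) (hbd : ∀ s, |f s| ≤ M) :
    (∫ s in a..b, (f s) ^ 2) - (b - a)⁻¹ * (∫ s in a..b, f s) ^ 2
      ≤ (min (Kc * h) (2 * M)) ^ 2 * (b - a) := by
  have hf : Continuous f := hlip.continuous
  have hba : (0:ℝ) < b - a := by linarith
  set c : ℝ := (∫ s in a..b, f s) / (b - a) with hc
  -- identity
  have hint : ∀ g : ℝ → ℝ, Continuous g → IntervalIntegrable g volume a b :=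
    fun g hg => hg.intervalIntegrable a b
  have hid : (∫ s in a..b, (f s - c) ^ 2)
      = (∫ s in a..b, (f s) ^ 2) - (b - a)⁻¹ * (∫ s in a..b, f s) ^ 2 := by
    have hdec : (fun s => (f s - c) ^ 2) = fun s => (f s) ^ 2 - 2 * c * f s + c ^ 2 := by
      funext s; ring
    rw [hdec, intervalIntegral.integral_add ((hint (fun s => (f s) ^ 2) ((hf.pow 2))).sub
        ((hint _ hf).const_mul _)) (intervalIntegrable_const),
      intervalIntegral.integral_sub (hint (fun s => (f s) ^ 2) (hf.pow 2)) ((hint _ hf).const_mul _),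
      intervalIntegral.integral_const_mul, intervalIntegral.integral_const]
    rw [hc]
    have hne : b - a ≠ 0 := hba.ne'
    simp only [smul_eq_mul, div_pow]
    field_simp
    ring
  rw [← hid]
  -- pointwise bound on Icc
  have hcM : |c| ≤ M := by
    rw [hc, abs_div, abs_of_pos hba, div_le_iff₀ hba]
    calc |∫ s in a..b, f s| = ‖∫ s in a..b, f s‖ := rfl
      _ ≤ M * |b - a| := intervalIntegral.norm_integral_le_of_norm_le_const
          (fun s _ => hbd s)
      _ = M * (b - a) := by rw [abs_of_pos hba]
  have hptK : ∀ s ∈ Icc a b, |f s - c| ≤ Kc * h := by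
    intro s hs
    have h1 : f s - c = (b - a)⁻¹ * ∫ t in a..b, (f s - f t) := by
      rw [intervalIntegral.integral_sub (intervalIntegrable_const) (hint _ hf),
        intervalIntegral.integral_const, hc]
      field_simp
      ring
    rw [h1, abs_mul, abs_of_pos (inv_pos.2 hba)]
    have h2 : |∫ t in a..b, (f s - f t)| ≤ (Kc * h) * |b - a| := by
      rw [← Real.norm_eq_abs]
      refine intervalIntegral.norm_integral_le_of_norm_le_const (f := fun t => f s - f t) ?_
      intro t ht
      rw [uIoc_of_le hab.le] at ht
      have hts : |s - t| ≤ b - a := by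
        rcases hs with ⟨hs1, hs2⟩; rcases ht with ⟨ht1, ht2⟩
        rw [abs_le]; constructor <;> linarith
      calc ‖f s - f t‖ = dist (f s) (f t) := by rw [Real.dist_eq]; rfl
        _ ≤ Kc * dist s t := by
            have := hlip.dist_le_mul s t
            rwa [Real.coe_toNNReal _ hK] at this
        _ = Kc * |s - t| := by rw [Real.dist_eq]
        _ ≤ Kc * h := by
            have : |s - t| ≤ h := hts.trans hh
            exact mul_le_mul_of_nonneg_left this hK
    rw [abs_of_pos hba] at h2
    calc (b - a)⁻¹ * |∫ t in a..b, (f s - f t)| ≤ (b - a)⁻¹ * ((Kc * h) * (b - a)) :=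
        mul_le_mul_of_nonneg_left h2 (inv_pos.2 hba).le
      _ = Kc * h := by field_simp
  have hpt : ∀ s ∈ Icc a b, (f s - c) ^ 2 ≤ (min (Kc * h) (2 * M)) ^ 2 := by
    intro s hs
    have h1 : |f s - c| ≤ min (Kc * h) (2 * M) := by
      refine le_min (hptK s hs) ?_
      calc |f s - c| ≤ |f s| + |c| := abs_sub _ _
        _ ≤ M + M := add_le_add (hbd s) hcM
        _ = 2 * M := by ring
    calc (f s - c) ^ 2 = |f s - c| ^ 2 := (sq_abs _).symm
      _ ≤ (min (Kc * h) (2 * M)) ^ 2 := by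
          exact pow_le_pow_left₀ (abs_nonneg _) h1 2
  calc (∫ s in a..b, (f s - c) ^ 2) ≤ ∫ s in a..b, (min (Kc * h) (2 * M)) ^ 2 :=
      intervalIntegral.integral_mono_on hab.le
        (hint _ (by continuity)) intervalIntegrable_const hpt
    _ = (min (Kc * h) (2 * M)) ^ 2 * (b - a) := by
        rw [intervalIntegral.integral_const, smul_eq_mul, mul_comm]

lemma bessel {n : ℕ} {a b : ℝ} (hab : a < b) {φ : Fin n → ℝ → ℝ} {f : ℝ → ℝ}
    (hf : Continuous f)
    (hφm : ∀ l, AEStronglyMeasurable (φ l) (volume.restrict (Ioc a b)))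
    (hφ2 : ∀ l, IntervalIntegrable (fun s => (φ l s) ^ 2) volume a b)
    (horth : ∀ l l', l ≠ l' → (∫ s in a..b, φ l s * φ l' s) = 0)
    (hpos : ∀ l, 0 < ∫ s in a..b, (φ l s) ^ 2)
    (hφf : ∀ l, IntervalIntegrable (fun s => φ l s * f s) volume a b) :
    ∑ l : Fin n, (∫ s in a..b, (φ l s) ^ 2)⁻¹ * (∫ s in a..b, φ l s * f s) ^ 2
      ≤ ∫ s in a..b, (f s) ^ 2 := by
  have hIoc : ∀ g : ℝ → ℝ, IntegrableOn g (Ioc a b) volume → IntervalIntegrable g volume a b :=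
    fun g hg => (intervalIntegrable_iff_integrableOn_Ioc_of_le hab.le).2 hg
  have hIoc' : ∀ g : ℝ → ℝ, IntervalIntegrable g volume a b → IntegrableOn g (Ioc a b) volume :=
    fun g hg => (intervalIntegrable_iff_integrableOn_Ioc_of_le hab.le).1 hg
  have hφφ : ∀ l l', IntervalIntegrable (fun s => φ l s * φ l' s) volume a b := by
    intro l l'
    refine hIoc _ ?_
    refine Integrable.mono ((hIoc' _ (hφ2 l)).add (hIoc' _ (hφ2 l'))) ((hφm l).mul (hφm l')) ?_
    filter_upwards with s
    have h1 : |φ l s * φ l' s| ≤ (φ l s) ^ 2 + (φ l' s) ^ 2 := by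
      rw [abs_mul]
      nlinarith [abs_nonneg (φ l s), abs_nonneg (φ l' s), sq_abs (φ l s),
        sq_abs (φ l' s), sq_nonneg (|φ l s| - |φ l' s|)]
    calc ‖φ l s * φ l' s‖ = |φ l s * φ l' s| := rfl
      _ ≤ (φ l s) ^ 2 + (φ l' s) ^ 2 := h1
      _ ≤ ‖(φ l s) ^ 2 + (φ l' s) ^ 2‖ := le_abs_self _
  set G : Fin n → ℝ := fun l => ∫ s in a..b, (φ l s) ^ 2 with hG
  set A : Fin n → ℝ := fun l => ∫ s in a..b, φ l s * f s with hA
  set c : Fin n → ℝ := fun l => A l / G l with hc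
  have hfi : IntervalIntegrable (fun s => (f s) ^ 2) volume a b := (hf.pow 2).intervalIntegrable a b
  have hfS : IntervalIntegrable (fun s => ∑ l : Fin n, c l * (φ l s * f s)) volume a b := by
    have h1 := IntervalIntegrable.sum (μ := volume) (a := a) (b := b)
      (f := fun l s => c l * (φ l s * f s)) Finset.univ
      (fun l _ => (hφf l).const_mul (c l))
    rwa [show (∑ l : Fin n, fun s => c l * (φ l s * f s))
      = fun s => ∑ l : Fin n, c l * (φ l s * f s) from funext fun s => by
        simp [Finset.sum_apply]] at h1
  have hSSl : ∀ l : Fin n, IntervalIntegrable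
      (fun s => ∑ l' : Fin n, (c l * c l') * (φ l s * φ l' s)) volume a b := by
    intro l
    have h1 := IntervalIntegrable.sum (μ := volume) (a := a) (b := b)
      (f := fun l' s => (c l * c l') * (φ l s * φ l' s)) Finset.univ
      (fun l' _ => (hφφ l l').const_mul _)
    rwa [show (∑ l' : Fin n, fun s => (c l * c l') * (φ l s * φ l' s))
      = fun s => ∑ l' : Fin n, (c l * c l') * (φ l s * φ l' s) from funext fun s => by
        simp [Finset.sum_apply]] at h1
  have hSS : IntervalIntegrable
      (fun s => ∑ l : Fin n, ∑ l' : Fin n, (c l * c l') * (φ l s * φ l' s)) volume a b := by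
    have h1 := IntervalIntegrable.sum (μ := volume) (a := a) (b := b)
      (f := fun l s => ∑ l' : Fin n, (c l * c l') * (φ l s * φ l' s)) Finset.univ
      (fun l _ => hSSl l)
    rwa [show (∑ l : Fin n, fun s => ∑ l' : Fin n, (c l * c l') * (φ l s * φ l' s))
      = fun s => ∑ l : Fin n, ∑ l' : Fin n, (c l * c l') * (φ l s * φ l' s) from
        funext fun s => by simp [Finset.sum_apply]] at h1
  have e1 : ∀ s, (∑ l : Fin n, c l * φ l s) * (∑ l : Fin n, c l * φ l s)
      = ∑ l : Fin n, ∑ l' : Fin n, (c l * c l') * (φ l s * φ l' s) := by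
    intro s
    rw [Finset.sum_mul_sum]
    exact Finset.sum_congr rfl fun l _ => Finset.sum_congr rfl fun l' _ => by ring
  have e2 : ∀ s, f s * (∑ l : Fin n, c l * φ l s) = ∑ l : Fin n, c l * (φ l s * f s) := by
    intro s
    rw [Finset.mul_sum]
    exact Finset.sum_congr rfl fun l _ => by ring
  have hdec : (fun s => (f s - ∑ l : Fin n, c l * φ l s) ^ 2)
      = fun s => ((f s) ^ 2 - 2 * ∑ l : Fin n, c l * (φ l s * f s))
          + ∑ l : Fin n, ∑ l' : Fin n, (c l * c l') * (φ l s * φ l' s) := by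
    funext s
    rw [sub_sq, mul_assoc 2 (f s) _, e2 s, pow_two (∑ l : Fin n, c l * φ l s), e1 s]
  have key : (∫ s in a..b, (f s - ∑ l : Fin n, c l * φ l s) ^ 2)
      = (∫ s in a..b, (f s) ^ 2) - 2 * ∑ l : Fin n, c l * A l
        + ∑ l : Fin n, (c l) ^ 2 * G l := by
    rw [hdec, intervalIntegral.integral_add ((hfi.sub (hfS.const_mul 2))) hSS,
      intervalIntegral.integral_sub hfi (hfS.const_mul 2),
      intervalIntegral.integral_const_mul]
    congr 1
    · congr 1
      rw [intervalIntegral.integral_finset_sum (f := fun l s => c l * (φ l s * f s))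
        (fun l _ => (hφf l).const_mul (c l))]
      congr 1
      exact Finset.sum_congr rfl fun l _ => by rw [intervalIntegral.integral_const_mul]
    · rw [intervalIntegral.integral_finset_sum
        (f := fun l s => ∑ l' : Fin n, (c l * c l') * (φ l s * φ l' s)) (fun l _ => hSSl l)]
      refine Finset.sum_congr rfl fun l _ => ?_
      rw [intervalIntegral.integral_finset_sum
        (f := fun l' s => (c l * c l') * (φ l s * φ l' s)) (fun l' _ => (hφφ l l').const_mul _)]
      rw [Finset.sum_eq_single l]
      · rw [intervalIntegral.integral_const_mul]
        have h3 : (fun s => φ l s * φ l s) = fun s => (φ l s) ^ 2 := by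
          funext s; ring
        rw [show (∫ s in a..b, φ l s * φ l s) = ∫ s in a..b, (φ l s) ^ 2 by rw [h3]]
        have h4 : (∫ s in a..b, (φ l s) ^ 2) = G l := rfl
        rw [h4]; ring
      · intro l' _ hne
        rw [intervalIntegral.integral_const_mul, horth l l' (Ne.symm hne), mul_zero]
      · intro habs; exact absurd (Finset.mem_univ l) habs
  have hnn : 0 ≤ ∫ s in a..b, (f s - ∑ l : Fin n, c l * φ l s) ^ 2 :=
    intervalIntegral.integral_nonneg hab.le (fun u _ => sq_nonneg _)
  rw [key] at hnn
  have hterm : ∀ l : Fin n, c l * A l = (G l)⁻¹ * (A l) ^ 2 := by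
    intro l
    have hGl : G l ≠ 0 := ne_of_gt (hpos l)
    rw [hc]
    field_simp
  have hterm2 : ∀ l : Fin n, (c l) ^ 2 * G l = (G l)⁻¹ * (A l) ^ 2 := by
    intro l
    have hGl : G l ≠ 0 := ne_of_gt (hpos l)
    rw [hc]
    field_simp
  rw [Finset.sum_congr rfl (fun l hl => hterm l), Finset.sum_congr rfl (fun l hl => hterm2 l)]
    at hnn
  linarith

lemma bracket {k : ℕ} {a b h M Kc α : ℝ} (hab : a < b) (hh : b - a ≤ h) (hh0 : 0 < h)
    (hα : 0 < α) (hα2 : α ≤ 2) (hM : 0 ≤ M) (hK : 0 ≤ Kc)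
    {φ : Fin (k + 1) → ℝ → ℝ} {f : ℝ → ℝ}
    (hlip : LipschitzWith Kc.toNNReal f) (hbd : ∀ s, |f s| ≤ M)
    (hφ0 : φ 0 = fun _ => 1)
    (horth : ∀ l l', l ≠ l' → (∫ s in a..b, φ l s * φ l' s) = 0)
    (hpos : ∀ l, 0 < ∫ s in a..b, (φ l s) ^ 2)
    (hφf : ∀ l, IntervalIntegrable (fun s => φ l s * f s) volume a b)
    (hφ2 : ∀ l, IntervalIntegrable (fun s => (φ l s) ^ 2) volume a b) :
    |(∑ l : Fin (k + 1), (∫ s in a..b, (φ l s) ^ 2)⁻¹ * (∫ s in a..b, φ l s * f s) ^ 2)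
        - ∫ s in a..b, (f s) ^ 2|
      ≤ (k + 1) * (Kc ^ α * h ^ α * (2 * M) ^ ((2:ℝ) - α)) * (b - a) := by
  have hf : Continuous f := hlip.continuous
  set β : ℝ := Kc ^ α * h ^ α * (2 * M) ^ ((2:ℝ) - α) with hβdef
  set E : ℝ := ∫ s in a..b, (f s) ^ 2 with hE
  set S : ℝ := ∑ l : Fin (k + 1), (∫ s in a..b, (φ l s) ^ 2)⁻¹
      * (∫ s in a..b, φ l s * f s) ^ 2 with hS
  have hba : (0:ℝ) < b - a := by linarith
  have hEnn : 0 ≤ E := intervalIntegral.integral_nonneg hab.le fun s _ => sq_nonneg _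
  have htermnn : ∀ l : Fin (k + 1),
      0 ≤ (∫ s in a..b, (φ l s) ^ 2)⁻¹ * (∫ s in a..b, φ l s * f s) ^ 2 :=
    fun l => mul_nonneg (inv_nonneg.2 (hpos l).le) (sq_nonneg _)
  have hSnn : 0 ≤ S := Finset.sum_nonneg fun l _ => htermnn l
  have hminsq : (min (Kc * h) (2 * M)) ^ 2 ≤ β := by
    have := min_sq_le (x := Kc * h) (y := 2 * M) (α := α)
      (mul_nonneg hK hh0.le) (by linarith) hα hα2
    calc (min (Kc * h) (2 * M)) ^ 2 ≤ (Kc * h) ^ α * (2 * M) ^ ((2:ℝ) - α) := this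
      _ = β := by rw [hβdef, Real.mul_rpow hK hh0.le]
  have hβnn : 0 ≤ β := le_trans (sq_nonneg _) hminsq
  -- bound 1 : E - S ≤ β * (b - a), via the constant function`φ 0`
  have hterm0 : (∫ s in a..b, (φ 0 s) ^ 2)⁻¹ * (∫ s in a..b, φ 0 s * f s) ^ 2
      = (b - a)⁻¹ * (∫ s in a..b, f s) ^ 2 := by
    simp only [hφ0, one_pow, one_mul, intervalIntegral.integral_const, smul_eq_mul, mul_one]
  have hgap : E - S ≤ β * (b - a) := by
    have h1 : (b - a)⁻¹ * (∫ s in a..b, f s) ^ 2 ≤ S := by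
      rw [← hterm0]
      exact Finset.single_le_sum (fun l _ => htermnn l) (Finset.mem_univ 0)
    have h2 : E - (b - a)⁻¹ * (∫ s in a..b, f s) ^ 2 ≤ (min (Kc * h) (2 * M)) ^ 2 * (b - a) :=
      meansq hab hh hM hK hlip hbd
    nlinarith [mul_le_mul_of_nonneg_right hminsq hba.le]
  by_cases hmeas : ∀ l, AEStronglyMeasurable (φ l) (volume.restrict (Set.Ioc a b))
  · -- good case : Bessel
    have hbes : S ≤ E := bessel hab hf hmeas hφ2 horth hpos hφf
    rw [abs_le]
    constructor
    · have : (0:ℝ) ≤ (k + 1 : ℝ) * β * (b - a) := by positivity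
      nlinarith
    · have hβb : β * (b - a) ≤ (k + 1 : ℝ) * β * (b - a) := by nlinarith [mul_nonneg hβnn hba.le]
      nlinarith
  · -- bad case : some φ l is not a.e. measurable, so f vanishes somewhere on [a,b]
    push_neg at hmeas
    obtain ⟨l0, hl0⟩ := hmeas
    have hzero : ∃ t ∈ Set.Icc a b, f t = 0 := by
      by_contra hno
      push_neg at hno
      apply hl0
      obtain ⟨g, hgm, hge⟩ :=
        ((intervalIntegrable_iff_integrableOn_Ioc_of_le hab.le).1 (hφf l0)).aestronglyMeasurable
      refine ⟨fun s => g s / f s, (hgm.measurable.div hf.measurable).stronglyMeasurable, ?_⟩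
      filter_upwards [hge, self_mem_ae_restrict measurableSet_Ioc] with s hs1 hs2
      have hfne : f s ≠ 0 := hno s (Set.Ioc_subset_Icc_self hs2)
      rw [← hs1]
      field_simp
    obtain ⟨t0, ht0, hft0⟩ := hzero
    have hfs : ∀ s ∈ Set.Icc a b, |f s| ≤ min (Kc * h) (2 * M) := by
      intro s hs
      refine le_min ?_ (by nlinarith [hbd s, abs_nonneg (f s)])
      have h1 : |f s - f t0| ≤ Kc * |s - t0| := by
        have := hlip.dist_le_mul s t0
        rwa [Real.coe_toNNReal _ hK, Real.dist_eq, Real.dist_eq] at this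
      have h2 : |s - t0| ≤ h := by
        rcases hs with ⟨h3, h4⟩; rcases ht0 with ⟨h5, h6⟩
        rw [abs_le]; constructor <;> linarith
      calc |f s| = |f s - f t0| := by rw [hft0, sub_zero]
        _ ≤ Kc * |s - t0| := h1
        _ ≤ Kc * h := mul_le_mul_of_nonneg_left h2 hK
    have hEβ : E ≤ β * (b - a) := by
      have h1 : ∀ s ∈ Set.Icc a b, (f s) ^ 2 ≤ β := by
        intro s hs
        calc (f s) ^ 2 = |f s| ^ 2 := (sq_abs _).symm
          _ ≤ (min (Kc * h) (2 * M)) ^ 2 :=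
              pow_le_pow_left₀ (abs_nonneg _) (hfs s hs) 2
          _ ≤ β := hminsq
      have h2 : E ≤ ∫ _s in a..b, β := intervalIntegral.integral_mono_on hab.le
        ((hf.pow 2).intervalIntegrable a b) intervalIntegrable_const h1
      calc E ≤ ∫ _s in a..b, β := h2
        _ = β * (b - a) := by rw [intervalIntegral.integral_const, smul_eq_mul, mul_comm]
    have hterm : ∀ l : Fin (k + 1),
        (∫ s in a..b, (φ l s) ^ 2)⁻¹ * (∫ s in a..b, φ l s * f s) ^ 2 ≤ E := by
      intro l
      have hcs := cs_lemma (M := M) hab.le hf hbd (hφ2 l) (hφf l)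
      have hGpos := hpos l
      calc (∫ s in a..b, (φ l s) ^ 2)⁻¹ * (∫ s in a..b, φ l s * f s) ^ 2
          ≤ (∫ s in a..b, (φ l s) ^ 2)⁻¹ * ((∫ s in a..b, (φ l s) ^ 2) * E) :=
            mul_le_mul_of_nonneg_left hcs (inv_nonneg.2 hGpos.le)
        _ = E := by field_simp
    have hSb : S ≤ (k + 1 : ℝ) * E := by
      calc S ≤ ∑ _l : Fin (k + 1), E := Finset.sum_le_sum fun l _ => hterm l
        _ = (k + 1 : ℝ) * E := by
            rw [Finset.sum_const, Finset.card_univ, Fintype.card_fin, nsmul_eq_mul]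
            push_cast; ring
    rw [abs_le]
    constructor
    · have h1 : S - E ≤ (k + 1 : ℝ) * E - E := by linarith
      have h2 : (k + 1 : ℝ) * E ≤ (k + 1 : ℝ) * (β * (b - a)) :=
        mul_le_mul_of_nonneg_left hEβ (by positivity)
      nlinarith
    · have h2 : (k + 1 : ℝ) * E ≤ (k + 1 : ℝ) * (β * (b - a)) :=
        mul_le_mul_of_nonneg_left hEβ (by positivity)
      nlinarith


/-- If the eigenfunctions `e_m` are uniformly bounded and Lipschitz with constants
`K_m` such that `∑ γ_m K_m^α < ∞` for some `α ∈ (0,2]`, then the discrete energy-law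
constant `K` satisfies `|K - Tr(Q)| ≤ C h^α` with `C` independent of the mesh,
provided the total mesh length stays bounded by `C'`. -/
theorem stmt_3 (e : ℕ → ℝ → ℝ) (γ Km : ℕ → ℝ) (M : ℝ) (α : ℝ)
    (hα : 0 < α) (hα2 : α ≤ 2) (k : ℕ) (C' : ℝ)
    (hγ : ∀ m, 0 ≤ γ m) (hsγ : Summable γ) (hKm : ∀ m, 0 ≤ Km m)
    (hlip : ∀ m, LipschitzWith (Real.toNNReal (Km m)) (e m))
    (hbd : ∀ m s, |e m s| ≤ M)
    (hsum : Summable fun m => γ m * Km m ^ α) :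
    ∃ C : ℝ, 0 < C ∧
      ∀ (N : ℕ) (x : Fin (N + 1) → ℝ) (φ : Fin N → Fin (k + 1) → ℝ → ℝ) (h : ℝ),
        0 < h →
        (∀ j : Fin N, x j.castSucc < x j.succ) →
        (∀ j : Fin N, x j.succ - x j.castSucc ≤ h) →
        (∑ j : Fin N, (x j.succ - x j.castSucc)) ≤ C' →
        (∀ j : Fin N, φ j 0 = fun _ => 1) →
        (∀ j : Fin N, ∀ l : Fin (k + 1), l ≠ 0 →
          (∫ s in (x j.castSucc)..(x j.succ), φ j l s) = 0) →
        (∀ j : Fin N, ∀ l l' : Fin (k + 1), l ≠ l' →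
          (∫ s in (x j.castSucc)..(x j.succ), φ j l s * φ j l' s) = 0) →
        (∀ j l, 0 < ∫ s in (x j.castSucc)..(x j.succ), (φ j l s) ^ 2) →
        (∀ j l m, IntervalIntegrable (fun s => φ j l s * e m s) volume
          (x j.castSucc) (x j.succ)) →
        (∀ j l, IntervalIntegrable (fun s => (φ j l s) ^ 2) volume
          (x j.castSucc) (x j.succ)) →
        (∀ m, (∑ j : Fin N, ∫ s in (x j.castSucc)..(x j.succ), (e m s) ^ 2) = 1) →
        |(∑ j : Fin N, ∑ l : Fin (k + 1),
            (∫ s in (x j.castSucc)..(x j.succ), (φ j l s) ^ 2)⁻¹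
              * ∑' m : ℕ,
                  (∫ s in (x j.castSucc)..(x j.succ),
                    φ j l s * Real.sqrt (γ m) * e m s) ^ 2)
          - ∑' m : ℕ, γ m| ≤ C * h ^ α := by
  classical
  have hMnn : 0 ≤ M := le_trans (abs_nonneg _) (hbd 0 0)
  set T : ℝ := ∑' m, γ m * Km m ^ α with hT
  have hTnn : 0 ≤ T :=
    tsum_nonneg fun m => mul_nonneg (hγ m) (Real.rpow_nonneg (hKm m) α)
  set BB : ℝ := (k + 1 : ℝ) * (2 * M) ^ ((2:ℝ) - α) * (|C'| + 1) with hBB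
  have hBBnn : 0 ≤ BB := by
    apply mul_nonneg (mul_nonneg (by positivity) (Real.rpow_nonneg (by linarith) _))
    positivity
  refine ⟨BB * T + 1, by nlinarith [mul_nonneg hBBnn hTnn], ?_⟩
  intro N x φ h hh0 hlt hle hC' hφ0 _hmean horth hpos hφe hφ2 hnorm
  -- abbreviations
  set G : Fin N → Fin (k + 1) → ℝ :=
    fun j l => ∫ s in (x j.castSucc)..(x j.succ), (φ j l s) ^ 2 with hG
  set A : Fin N → Fin (k + 1) → ℕ → ℝ :=
    fun j l m => ∫ s in (x j.castSucc)..(x j.succ), φ j l s * e m s with hA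
  set Ee : Fin N → ℕ → ℝ :=
    fun j m => ∫ s in (x j.castSucc)..(x j.succ), (e m s) ^ 2 with hEe
  have hDnn : ∀ j : Fin N, 0 < x j.succ - x j.castSucc := fun j => by linarith [hlt j]
  -- E bound
  have hEle : ∀ j m, Ee j m ≤ M ^ 2 * (x j.succ - x j.castSucc) := by
    intro j m
    have h1 : ∀ s ∈ Set.Icc (x j.castSucc) (x j.succ), (e m s) ^ 2 ≤ M ^ 2 := by
      intro s _
      calc (e m s) ^ 2 = |e m s| ^ 2 := (sq_abs _).symm
        _ ≤ M ^ 2 := pow_le_pow_left₀ (abs_nonneg _) (hbd m s) 2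
    calc Ee j m ≤ ∫ _s in (x j.castSucc)..(x j.succ), M ^ 2 :=
        intervalIntegral.integral_mono_on (hlt j).le
          (((hlip m).continuous.pow 2).intervalIntegrable _ _) intervalIntegrable_const h1
      _ = M ^ 2 * (x j.succ - x j.castSucc) := by
          rw [intervalIntegral.integral_const, smul_eq_mul, mul_comm]
  have hA2 : ∀ j l m, (A j l m) ^ 2 ≤ G j l * (M ^ 2 * (x j.succ - x j.castSucc)) := by
    intro j l m
    have hcs := cs_lemma (M := M) (hlt j).le (hlip m).continuous (hbd m) (hφ2 j l) (hφe j l m)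
    exact le_trans hcs (mul_le_mul_of_nonneg_left (hEle j m) (hpos j l).le)
  -- summability of summands
  have hsummand : ∀ j l, Summable fun m => (G j l)⁻¹ * (γ m * (A j l m) ^ 2) := by
    intro j l
    refine Summable.of_nonneg_of_le
      (fun m => mul_nonneg (inv_nonneg.2 (hpos j l).le) (mul_nonneg (hγ m) (sq_nonneg _)))
      (fun m => ?_) (hsγ.mul_left ((G j l)⁻¹ * (G j l * (M ^ 2 * (x j.succ - x j.castSucc)))))
    calc (G j l)⁻¹ * (γ m * (A j l m) ^ 2) = γ m * ((G j l)⁻¹ * (A j l m) ^ 2) := by ring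
      _ ≤ γ m * ((G j l)⁻¹ * (G j l * (M ^ 2 * (x j.succ - x j.castSucc)))) := by
          exact mul_le_mul_of_nonneg_left
            (mul_le_mul_of_nonneg_left (hA2 j l m) (inv_nonneg.2 (hpos j l).le)) (hγ m)
      _ = (G j l)⁻¹ * (G j l * (M ^ 2 * (x j.succ - x j.castSucc))) * γ m := by ring
  set W : ℕ → ℝ := fun m => ∑ j : Fin N, ∑ l : Fin (k + 1), (G j l)⁻¹ * (γ m * (A j l m) ^ 2)
    with hW
  have hWsummable : Summable W :=
    summable_sum fun j _ => summable_sum fun l _ => hsummand j l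
  -- rewrite LHS
  have hLHS : (∑ j : Fin N, ∑ l : Fin (k + 1),
      (∫ s in (x j.castSucc)..(x j.succ), (φ j l s) ^ 2)⁻¹
        * ∑' m : ℕ, (∫ s in (x j.castSucc)..(x j.succ),
            φ j l s * Real.sqrt (γ m) * e m s) ^ 2) = ∑' m, W m := by
    have e1 : ∀ j l, (∫ s in (x j.castSucc)..(x j.succ), (φ j l s) ^ 2)⁻¹
        * (∑' m : ℕ, (∫ s in (x j.castSucc)..(x j.succ),
            φ j l s * Real.sqrt (γ m) * e m s) ^ 2)
        = ∑' m : ℕ, (G j l)⁻¹ * (γ m * (A j l m) ^ 2) := by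
      intro j l
      rw [← tsum_mul_left]
      refine tsum_congr fun m => ?_
      have h2 : (fun s => φ j l s * Real.sqrt (γ m) * e m s)
          = fun s => Real.sqrt (γ m) * (φ j l s * e m s) := by
        funext s; ring
      rw [h2, intervalIntegral.integral_const_mul, mul_pow, Real.sq_sqrt (hγ m)]
    rw [Finset.sum_congr rfl fun j _ => Finset.sum_congr rfl fun l _ => e1 j l]
    rw [Finset.sum_congr rfl fun j (_ : j ∈ Finset.univ) =>
      (Summable.tsum_finsetSum fun l (_ : l ∈ Finset.univ) => hsummand j l).symm]
    exact (Summable.tsum_finsetSum fun j (_ : j ∈ Finset.univ) =>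
      summable_sum fun l _ => hsummand j l).symm
  rw [hLHS]
  -- per-m bound
  have hkey : ∀ m, |W m - γ m| ≤ (γ m * Km m ^ α) * (BB * h ^ α) := by
    intro m
    have hβnn : 0 ≤ Km m ^ α * h ^ α * (2 * M) ^ ((2:ℝ) - α) := by
      apply mul_nonneg (mul_nonneg (Real.rpow_nonneg (hKm m) _) (Real.rpow_nonneg hh0.le _))
      exact Real.rpow_nonneg (by linarith) _
    have h1 : W m - γ m = γ m * ∑ j : Fin N,
        ((∑ l : Fin (k + 1), (G j l)⁻¹ * (A j l m) ^ 2) - Ee j m) := by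
      have h2 : (∑ j : Fin N, Ee j m) = 1 := hnorm m
      have hWm : W m = γ m * ∑ j : Fin N, ∑ l : Fin (k + 1), (G j l)⁻¹ * (A j l m) ^ 2 := by
        rw [hW, Finset.mul_sum]
        refine Finset.sum_congr rfl fun j _ => ?_
        rw [Finset.mul_sum]
        exact Finset.sum_congr rfl fun l _ => by ring
      rw [Finset.sum_sub_distrib, mul_sub, h2, mul_one, hWm]
    have h3 : ∀ j : Fin N, |(∑ l : Fin (k + 1), (G j l)⁻¹ * (A j l m) ^ 2) - Ee j m|
        ≤ (k + 1 : ℝ) * (Km m ^ α * h ^ α * (2 * M) ^ ((2:ℝ) - α))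
            * (x j.succ - x j.castSucc) := by
      intro j
      exact bracket (hlt j) (hle j) hh0 hα hα2 hMnn (hKm m) (hlip m) (hbd m)
        (hφ0 j) (horth j) (hpos j) (fun l => hφe j l m) (hφ2 j)
    calc |W m - γ m| = γ m * |∑ j : Fin N,
        ((∑ l : Fin (k + 1), (G j l)⁻¹ * (A j l m) ^ 2) - Ee j m)| := by
          rw [h1, abs_mul, abs_of_nonneg (hγ m)]
      _ ≤ γ m * ∑ j : Fin N, |(∑ l : Fin (k + 1), (G j l)⁻¹ * (A j l m) ^ 2) - Ee j m| :=
          mul_le_mul_of_nonneg_left (Finset.abs_sum_le_sum_abs _ _) (hγ m)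
      _ ≤ γ m * ∑ j : Fin N, (k + 1 : ℝ) * (Km m ^ α * h ^ α * (2 * M) ^ ((2:ℝ) - α))
            * (x j.succ - x j.castSucc) :=
          mul_le_mul_of_nonneg_left (Finset.sum_le_sum fun j _ => h3 j) (hγ m)
      _ = γ m * ((k + 1 : ℝ) * (Km m ^ α * h ^ α * (2 * M) ^ ((2:ℝ) - α)))
            * ∑ j : Fin N, (x j.succ - x j.castSucc) := by
          rw [← Finset.mul_sum]; ring
      _ ≤ γ m * ((k + 1 : ℝ) * (Km m ^ α * h ^ α * (2 * M) ^ ((2:ℝ) - α))) * (|C'| + 1) := by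
          refine mul_le_mul_of_nonneg_left ?_ ?_
          · linarith [le_abs_self C']
          · exact mul_nonneg (hγ m) (mul_nonneg (by positivity) hβnn)
      _ = (γ m * Km m ^ α) * (BB * h ^ α) := by rw [hBB]; ring
  -- conclude via tsum sandwich
  set bnd : ℕ → ℝ := fun m => (γ m * Km m ^ α) * (BB * h ^ α) with hbnd
  have hbnds : Summable bnd := hsum.mul_right _
  have hWγ : Summable fun m => W m - γ m := hWsummable.sub hsγ
  rw [← Summable.tsum_sub hWsummable hsγ]
  have habs : |∑' m, (W m - γ m)| ≤ ∑' m, bnd m := by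
    rw [abs_le]
    constructor
    · rw [← tsum_neg]
      refine Summable.tsum_le_tsum (fun m => ?_) hbnds.neg hWγ
      have h5 := (abs_le.1 (hkey m)).1
      simp only [hbnd]
      linarith
    · exact Summable.tsum_le_tsum (fun m => (abs_le.1 (hkey m)).2) hWγ hbnds
  have hbndval : (∑' m, bnd m) = T * (BB * h ^ α) := by
    rw [hbnd, tsum_mul_right, hT]
  have hha : 0 ≤ h ^ α := Real.rpow_nonneg hh0.le _
  calc |∑' m, (W m - γ m)| ≤ T * (BB * h ^ α) := by rw [← hbndval]; exact habs
    _ = (BB * T) * h ^ α := by ring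
    _ ≤ (BB * T + 1) * h ^ α := by nlinarith
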